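/- Let d ≥ 2 and let G be a finite simple graph on n vertices with no isolated vertex such that the maximum degree of the complement of G equals d − 1. Then scc(G) ≤ (e² + 1) · n · d · ⌈ln((n−1)/(d−1))⌉, where ln is the natural logarithm and ⌈·⌉ is the ceiling of the real number (n−1)/(d−1)'s natural logarithm. -/

import Mathlib

open Finset

/-- A clique covering of `G`: a finite family of cliques covering every edge. -/
def IsCliqueCover {V : Type*} (G : SimpleGraph V) (𝒞 : Finset (Finset V)) : Prop :=
  (∀ C ∈ 𝒞, G.IsClique (C : Set V)) ∧
  ∀ u v, G.Adj u v → ∃ C ∈ 𝒞, u ∈ C ∧ v ∈ C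

/-- A clique partition of `G`: every edge lies in exactly one clique of the family. -/
def IsCliquePartition {V : Type*} (G : SimpleGraph V) (𝒞 : Finset (Finset V)) : Prop :=
  (∀ C ∈ 𝒞, G.IsClique (C : Set V)) ∧
  ∀ u v, G.Adj u v → ∃! C, C ∈ 𝒞 ∧ u ∈ C ∧ v ∈ C

/-- The sigma clique cover number: minimum total size of cliques in a clique covering. -/
noncomputable def scc {V : Type*} (G : SimpleGraph V) : ℕ :=
  sInf {k | ∃ 𝒞, IsCliqueCover G 𝒞 ∧ ∑ C ∈ 𝒞, C.card = k}

/-- The sigma clique partition number: minimum total size of cliques in a clique partition. -/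
noncomputable def scp {V : Type*} (G : SimpleGraph V) : ℕ :=
  sInf {k | ∃ 𝒞, IsCliquePartition G 𝒞 ∧ ∑ C ∈ 𝒞, C.card = k}

/-- The clique cover number: minimum number of cliques in a clique covering. -/
noncomputable def cc {V : Type*} (G : SimpleGraph V) : ℕ :=
  sInf {k | ∃ 𝒞, IsCliqueCover G 𝒞 ∧ 𝒞.card = k}

/-- The clique partition number: minimum number of cliques in a clique partition. -/
noncomputable def cp {V : Type*} (G : SimpleGraph V) : ℕ :=
  sInf {k | ∃ 𝒞, IsCliquePartition G 𝒞 ∧ 𝒞.card = k}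

/-- `scc'`: the minimum total size of cliques over clique coverings achieving `cc G`. -/
noncomputable def scc' {V : Type*} (G : SimpleGraph V) : ℕ :=
  sInf {k | ∃ 𝒞, IsCliqueCover G 𝒞 ∧ 𝒞.card = cc G ∧ ∑ C ∈ 𝒞, C.card = k}

/-! ### Auxiliary definitions and lemmas for the probabilistic construction -/

section Aux
variable {V : Type*} [Fintype V] [DecidableEq V]

/-- The set of vertices selected (colour `0`) by a single random trial `g`. -/
def auxS {d : ℕ} [NeZero d] (g : V → Fin d) : Finset V :=
  Finset.univ.filter fun v => g v = 0

/-- The pruned selected set: selected vertices with no selected `H`-neighbour. -/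
def auxS' (H : SimpleGraph V) [DecidableRel H.Adj] {d : ℕ} [NeZero d] (g : V → Fin d) :
    Finset V :=
  (auxS g).filter fun v => ∀ w ∈ auxS g, ¬ H.Adj v w

/-- The "good" trials for the pair `(u, v)`: both selected, no neighbour selected. -/
def auxGood (H : SimpleGraph V) [DecidableRel H.Adj] (d : ℕ) [NeZero d] (u v : V) :
    Finset (V → Fin d) :=
  Finset.univ.filter fun g => g u = 0 ∧ g v = 0 ∧
    ∀ w ∈ H.neighborFinset u ∪ H.neighborFinset v, g w ≠ 0

/-- The pairs of `A` not covered by any pruned set of the trial sequence `ω`. -/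
def auxP (H : SimpleGraph V) [DecidableRel H.Adj] {d t : ℕ} [NeZero d]
    (A : Finset (V × V)) (ω : Fin t → V → Fin d) : Finset (V × V) :=
  A.filter fun p => ¬ ∃ i, p.1 ∈ auxS' H (ω i) ∧ p.2 ∈ auxS' H (ω i)

lemma sum_image_le_nat {α β : Type*} [DecidableEq β] (s : Finset α) (f : α → β) (g : β → ℕ) :
    ∑ b ∈ s.image f, g b ≤ ∑ a ∈ s, g (f a) := by
  classical
  induction s using Finset.induction with
  | empty => simp
  | insert a s h ih =>
    rw [Finset.image_insert, Finset.sum_insert h]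
    by_cases hfa : f a ∈ s.image f
    · rw [Finset.insert_eq_self.mpr hfa]
      omega
    · rw [Finset.sum_insert hfa]
      omega

lemma mem_auxS'_of_good (H : SimpleGraph V) [DecidableRel H.Adj] {d : ℕ} [NeZero d]
    {u v : V} {g : V → Fin d} (hg : g ∈ auxGood H d u v) :
    u ∈ auxS' H g ∧ v ∈ auxS' H g := by
  simp only [auxGood, mem_filter, mem_univ, true_and] at hg
  obtain ⟨hu, hv, hN⟩ := hg
  constructor <;>
  · simp only [auxS', auxS, mem_filter, mem_univ, true_and]
    refine ⟨by assumption, fun w hw hadj => ?_⟩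
    exact hN w (by simp [SimpleGraph.mem_neighborFinset, hadj, hadj.symm]) hw

lemma aux_card_single (d : ℕ) [NeZero d] (v : V) :
    ((univ : Finset (V → Fin d)).filter fun g => g v = 0).card
      = d ^ (Fintype.card V - 1) := by
  have h : ((univ : Finset (V → Fin d)).filter fun g => g v = 0)
      = Fintype.piFinset (fun w => (if w = v then ({0} : Finset (Fin d)) else univ)) := by
    ext g
    simp only [mem_filter, mem_univ, true_and, Fintype.mem_piFinset]
    constructor
    · intro h w
      split_ifs with hw
      · subst hw; simpa using h
      · simp
    · intro h
      have := h v
      rw [if_pos rfl] at this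
      simpa using this
  rw [h, Fintype.card_piFinset, ← Finset.mul_prod_erase _ _ (mem_univ v), if_pos rfl]
  have h2 : ∀ w ∈ univ.erase v, (if w = v then ({0} : Finset (Fin d)) else univ).card = d := by
    intro w hw
    rw [if_neg (Finset.mem_erase.mp hw).1, card_univ, Fintype.card_fin]
  rw [Finset.prod_congr rfl h2, Finset.prod_const, Finset.card_erase_of_mem (mem_univ v),
    card_singleton, one_mul, card_univ]

lemma aux_card_coord (d : ℕ) [NeZero d] (t : ℕ) (i : Fin t) (v : V) :
    ((univ : Finset (Fin t → V → Fin d)).filter fun ω => ω i v = 0).card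
      = d ^ (Fintype.card V - 1) * (d ^ Fintype.card V) ^ (t - 1) := by
  have h : ((univ : Finset (Fin t → V → Fin d)).filter fun ω => ω i v = 0)
      = Fintype.piFinset (fun j =>
        (if j = i then ((univ : Finset (V → Fin d)).filter fun g => g v = 0) else univ)) := by
    ext ω
    simp only [mem_filter, mem_univ, true_and, Fintype.mem_piFinset]
    constructor
    · intro h j
      split_ifs with hj
      · subst hj; simp [h]
      · simp
    · intro h
      have := h i
      rw [if_pos rfl] at this
      simpa using this
  rw [h, Fintype.card_piFinset, ← Finset.mul_prod_erase _ _ (mem_univ i), if_pos rfl]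
  have h2 : ∀ j ∈ univ.erase i,
      (if j = i then ((univ : Finset (V → Fin d)).filter fun g => g v = 0) else univ).card
        = d ^ Fintype.card V := by
    intro j hj
    rw [if_neg (Finset.mem_erase.mp hj).1, card_univ, Fintype.card_fun, Fintype.card_fin]
  rw [Finset.prod_congr rfl h2, Finset.prod_const, Finset.card_erase_of_mem (mem_univ i),
    card_univ, Fintype.card_fin, aux_card_single]

lemma aux_card_bad (d : ℕ) [NeZero d] (t : ℕ) (Gd : Finset (V → Fin d)) :
    ((univ : Finset (Fin t → V → Fin d)).filter fun ω => ∀ i, ω i ∉ Gd).card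
      = (d ^ Fintype.card V - Gd.card) ^ t := by
  have h : ((univ : Finset (Fin t → V → Fin d)).filter fun ω => ∀ i, ω i ∉ Gd)
      = Fintype.piFinset (fun _ => Gdᶜ) := by
    ext ω
    simp [Fintype.mem_piFinset, Finset.mem_compl]
  rw [h, Fintype.card_piFinset]
  have h2 : (Gdᶜ).card = d ^ Fintype.card V - Gd.card := by
    rw [Finset.card_compl, Fintype.card_fun, Fintype.card_fin]
  rw [Finset.prod_congr rfl (fun j _ => h2), Finset.prod_const, card_univ, Fintype.card_fin]

lemma aux_exp_bound (d : ℕ) (hd : 2 ≤ d) :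
    (1:ℝ) / Real.exp 1 ^ 2 ≤ (((d:ℝ) - 1) / d) ^ (2 * (d - 1)) := by
  have hd2 : (2:ℝ) ≤ (d:ℝ) := by exact_mod_cast hd
  have hd1 : (1:ℝ) ≤ (d:ℝ) - 1 := by linarith
  have hapos : (0:ℝ) < ((d:ℝ) - 1) / d := by positivity
  have hlog : Real.log ((d:ℝ)/((d:ℝ)-1)) ≤ 1/((d:ℝ)-1) := by
    have h := Real.log_le_sub_one_of_pos (show (0:ℝ) < (d:ℝ)/((d:ℝ)-1) by positivity)
    have h2 : (d:ℝ)/((d:ℝ)-1) - 1 = 1/((d:ℝ)-1) := by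
      field_simp
      ring
    rw [h2] at h
    exact h
  have hloga : -(1/((d:ℝ)-1)) ≤ Real.log (((d:ℝ)-1)/d) := by
    rw [show (((d:ℝ)-1)/d) = ((d:ℝ)/((d:ℝ)-1))⁻¹ by rw [inv_div], Real.log_inv]
    linarith
  have hcast : ((2 * (d - 1) : ℕ) : ℝ) = 2 * ((d:ℝ) - 1) := by
    push_cast [Nat.cast_sub (by omega : 1 ≤ d)]
    ring
  have key : (((d:ℝ) - 1) / d) ^ (2 * (d - 1))
      = Real.exp (((2 * (d - 1) : ℕ) : ℝ) * Real.log (((d:ℝ)-1)/d)) := by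
    rw [Real.exp_nat_mul, Real.exp_log hapos]
  rw [key]
  have h1 : (-2 : ℝ) ≤ ((2 * (d - 1) : ℕ) : ℝ) * Real.log (((d:ℝ)-1)/d) := by
    rw [hcast]
    have h3 := mul_le_mul_of_nonneg_left hloga (show (0:ℝ) ≤ 2*((d:ℝ)-1) by linarith)
    have h4 : 2*((d:ℝ)-1) * -(1/((d:ℝ)-1)) = -2 := by
      field_simp
    linarith
  have h2 : (1:ℝ) / Real.exp 1 ^ 2 = Real.exp (-2) := by
    rw [Real.exp_neg, show Real.exp 1 ^ 2 = Real.exp ((2:ℕ) * 1) by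
      rw [Real.exp_nat_mul]]
    norm_num
  rw [h2]
  exact Real.exp_le_exp.mpr h1

lemma auxGood_card_lb (H : SimpleGraph V)
    [DecidableRel H.Adj] {d : ℕ} [NeZero d] (hd : 2 ≤ d) {u v : V} (huv : u ≠ v)
    (hnadj : ¬ H.Adj u v) (hdu : H.degree u ≤ d - 1) (hdv : H.degree v ≤ d - 1) :
    (d:ℝ) ^ Fintype.card V / (Real.exp 1 ^ 2 * (d:ℝ) ^ 2) ≤ ((auxGood H d u v).card : ℝ) := by
  set N := H.neighborFinset u ∪ H.neighborFinset v with hN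
  have huN : u ∉ N := by
    simp only [hN, mem_union, SimpleGraph.mem_neighborFinset]
    rintro (h | h)
    · exact H.irrefl h
    · exact hnadj h.symm
  have hvN : v ∉ N := by
    simp only [hN, mem_union, SimpleGraph.mem_neighborFinset]
    rintro (h | h)
    · exact hnadj h
    · exact H.irrefl h
  have hfilter : auxGood H d u v = Fintype.piFinset (fun w =>
      if w = u ∨ w = v then ({0} : Finset (Fin d))
      else if w ∈ N then ({0}ᶜ : Finset (Fin d)) else univ) := by
    ext g
    simp only [auxGood, mem_filter, mem_univ, true_and, Fintype.mem_piFinset, ← hN]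
    constructor
    · rintro ⟨h1, h2, h3⟩ w
      split_ifs with hw hwN
      · rcases hw with rfl | rfl <;> simp [h1, h2]
      · simpa using h3 w hwN
      · simp
    · intro h
      refine ⟨?_, ?_, fun w hw => ?_⟩
      · have := h u; rw [if_pos (Or.inl rfl)] at this; simpa using this
      · have := h v; rw [if_pos (Or.inr rfl)] at this; simpa using this
      · have hwu : ¬(w = u ∨ w = v) := by
          rintro (rfl | rfl); exacts [huN hw, hvN hw]
        have := h w
        rw [if_neg hwu, if_pos hw] at this
        simpa using this
  have hcard : (auxGood H d u v).card = d ^ (Fintype.card V - (N.card + 2)) * (d-1) ^ N.card := by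
    rw [hfilter, Fintype.card_piFinset]
    have huvN : u ∉ insert v N := by simp [huv, huN]
    have hsub : insert u (insert v N) ⊆ univ := subset_univ _
    rw [← Finset.prod_sdiff hsub]
    have hrest : ∀ w ∈ univ \ insert u (insert v N),
        (if w = u ∨ w = v then ({0} : Finset (Fin d))
          else if w ∈ N then ({0}ᶜ : Finset (Fin d)) else univ).card = d := by
      intro w hw
      simp only [mem_sdiff, mem_insert, not_or] at hw
      rw [if_neg (by tauto), if_neg hw.2.2.2, card_univ, Fintype.card_fin]
    have hmid : ∀ w ∈ N,
        (if w = u ∨ w = v then ({0} : Finset (Fin d))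
          else if w ∈ N then ({0}ᶜ : Finset (Fin d)) else univ).card = d - 1 := by
      intro w hw
      have : ¬(w = u ∨ w = v) := by rintro (rfl | rfl); exacts [huN hw, hvN hw]
      rw [if_neg this, if_pos hw, Finset.card_compl, card_singleton, Fintype.card_fin]
    rw [Finset.prod_congr rfl hrest, Finset.prod_const,
      Finset.prod_insert huvN, Finset.prod_insert hvN,
      if_pos (Or.inl rfl), if_pos (Or.inr rfl), card_singleton,
      Finset.prod_congr rfl hmid, Finset.prod_const,
      Finset.card_sdiff_of_subset hsub, card_univ,
      Finset.card_insert_of_notMem huvN, Finset.card_insert_of_notMem hvN]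
    ring
  have hd2R : (2:ℝ) ≤ (d:ℝ) := by exact_mod_cast hd
  have hdpos : (0:ℝ) < d := by linarith
  have hm2 : N.card ≤ 2 * (d - 1) := by
    have h1 : N.card ≤ (H.neighborFinset u).card + (H.neighborFinset v).card :=
      Finset.card_union_le _ _
    have h2 : (H.neighborFinset u).card = H.degree u := rfl
    have h3 : (H.neighborFinset v).card = H.degree v := rfl
    omega
  have hmn : N.card + 2 ≤ Fintype.card V := by
    have := Finset.card_le_card (subset_univ (insert u (insert v N)))
    rw [Finset.card_insert_of_notMem (by simp [huv, huN]),
      Finset.card_insert_of_notMem hvN, card_univ] at this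
    omega
  rw [hcard]
  have hcast : (((d : ℕ) - 1 : ℕ) : ℝ) = (d:ℝ) - 1 := by
    push_cast [Nat.cast_sub (by omega : 1 ≤ d)]; ring
  push_cast [hcast]
  set m := N.card
  set n' := Fintype.card V
  have hsplit : (d:ℝ) ^ (n' - (m + 2)) * (d:ℝ) ^ m * (d:ℝ) ^ 2 = (d:ℝ) ^ n' := by
    rw [← pow_add, ← pow_add]
    congr 1
    omega
  have hb1 : (1:ℝ)/Real.exp 1 ^ 2 ≤ (((d:ℝ) - 1) / d) ^ m :=
    le_trans (aux_exp_bound d hd)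
      (pow_le_pow_of_le_one (div_nonneg (by linarith) hdpos.le) (by
        rw [div_le_one hdpos]; linarith) hm2)
  have e2pos : (0:ℝ) < Real.exp 1 ^ 2 := by positivity
  calc (d:ℝ) ^ n' / (Real.exp 1 ^ 2 * (d:ℝ) ^ 2)
      = (d:ℝ) ^ (n' - (m + 2)) * (d:ℝ) ^ m * (1 / Real.exp 1 ^ 2) := by
        rw [← hsplit]; field_simp
    _ ≤ (d:ℝ) ^ (n' - (m + 2)) * (d:ℝ) ^ m * ((((d:ℝ) - 1) / d) ^ m) := by
        refine mul_le_mul_of_nonneg_left hb1 (by positivity)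
    _ = (d:ℝ) ^ (n' - (m + 2)) * ((d:ℝ) - 1) ^ m := by
        rw [div_pow, mul_assoc]
        congr 1
        field_simp

end Aux

set_option maxHeartbeats 1000000 in
/-- If `G` is a graph on `n` vertices with no isolated vertex and `Δ(Gᶜ) = d − 1`,
then `scc(G) ≤ (e² + 1) · n · d · ⌈ln((n−1)/(d−1))⌉`. -/
theorem stmt_9 {V : Type*} [Fintype V] [DecidableEq V] (G : SimpleGraph V)
    [DecidableRel G.Adj] (d n : ℕ) (hd : 2 ≤ d) (hn : n = Fintype.card V)
    (hiso : ∀ v : V, ∃ w, G.Adj v w) (hdeg : Gᶜ.maxDegree = d - 1) :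
    (scc G : ℝ) ≤ (Real.exp 1 ^ 2 + 1) * n * d *
      (⌈Real.log (((n : ℝ) - 1) / ((d : ℝ) - 1))⌉ : ℝ) := by
  haveI hdz : NeZero d := ⟨by omega⟩
  have hdle : ∀ w : V, Gᶜ.degree w ≤ d - 1 := by
    intro w
    have := Gᶜ.degree_le_maxDegree w
    omega
  have hVne : Nonempty V := by
    by_contra hne
    haveI : IsEmpty V := not_nonempty_iff.mp hne
    have h0 := Gᶜ.maxDegree_le_of_forall_degree_le 0 (fun v => (IsEmpty.false v).elim)
    omega
  have hn1 : 1 ≤ n := by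
    rw [hn]
    exact Fintype.card_pos_iff.mpr hVne
  -- `d < n`
  have hdn : d < n := by
    obtain ⟨v, hv⟩ := Gᶜ.exists_maximal_degree_vertex
    have hlt : Gᶜ.degree v < Fintype.card V := Gᶜ.degree_lt_card_verts v
    have hdn' : d ≤ n := by omega
    rcases eq_or_lt_of_le hdn' with heq | hlt'
    · exfalso
      obtain ⟨w, hw⟩ := hiso v
      have hwne : w ≠ v := hw.ne'
      have hdv : Gᶜ.degree v = n - 1 := by omega
      have hNv : Gᶜ.neighborFinset v = univ.erase v := by
        apply Finset.eq_of_subset_of_card_le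
        · intro a ha
          rw [SimpleGraph.mem_neighborFinset] at ha
          exact Finset.mem_erase.mpr ⟨(Gᶜ.ne_of_adj ha).symm, mem_univ a⟩
        · rw [Finset.card_erase_of_mem (mem_univ v), card_univ, ← hn]
          have : (Gᶜ.neighborFinset v).card = Gᶜ.degree v := rfl
          omega
      have hwadj : Gᶜ.Adj v w := by
        rw [← SimpleGraph.mem_neighborFinset, hNv]
        exact Finset.mem_erase.mpr ⟨hwne, mem_univ w⟩
      rw [SimpleGraph.compl_adj] at hwadj
      exact hwadj.2 hw
    · exact hlt'
  have hn3 : 3 ≤ n := by omega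
  -- real preliminaries
  have hd2R : (2:ℝ) ≤ (d:ℝ) := by exact_mod_cast hd
  have hdnR : (d:ℝ) < (n:ℝ) := by exact_mod_cast hdn
  have hdpos : (0:ℝ) < d := by linarith
  set x : ℝ := ((n:ℝ) - 1) / ((d:ℝ) - 1) with hxdef
  have hx1 : 1 < x := by
    rw [hxdef, lt_div_iff₀ (by linarith)]
    linarith
  have hx0 : 0 < x := by linarith
  have hlogx : 0 < Real.log x := Real.log_pos hx1
  set t : ℕ := ⌈Real.exp 1 ^ 2 * (d:ℝ)^2 * Real.log x⌉₊ with htdef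
  have ht_pos : 0 < t := Nat.ceil_pos.mpr (by positivity)
  have htlb : Real.exp 1 ^ 2 * (d:ℝ)^2 * Real.log x ≤ (t:ℝ) := Nat.le_ceil _
  have htub : (t:ℝ) ≤ Real.exp 1 ^ 2 * (d:ℝ)^2 * Real.log x + 1 := by
    have := Nat.ceil_lt_add_one (show (0:ℝ) ≤ Real.exp 1 ^ 2 * (d:ℝ)^2 * Real.log x by positivity)
    linarith
  -- an arbitrary linear order on `V` via `ee`
  set ee : V → ℕ := fun a => ((Fintype.equivFin V) a : ℕ) with heedef
  have hee_inj : Function.Injective ee := fun a b h =>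
    (Fintype.equivFin V).injective (Fin.val_injective h)
  set A : Finset (V × V) :=
    (univ ×ˢ univ).filter (fun p => ee p.1 < ee p.2 ∧ G.Adj p.1 p.2) with hAdef
  -- counting the candidate pairs
  have hA2 : 2 * A.card ≤ n * n - n := by
    set LT : Finset (V × V) := (univ ×ˢ univ).filter (fun p => ee p.1 < ee p.2) with hLT
    set GTs : Finset (V × V) := (univ ×ˢ univ).filter (fun p => ee p.2 < ee p.1) with hGT
    have hALT : A ⊆ LT := by
      intro p hp
      rw [hAdef, mem_filter] at hp
      rw [hLT, mem_filter]
      exact ⟨hp.1, hp.2.1⟩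
    have hcardeq : LT.card = GTs.card := by
      apply Finset.card_nbij' (fun p => (p.2, p.1)) (fun p => (p.2, p.1))
      · intro p hp
        simp only [hLT, hGT, Finset.mem_coe, mem_filter, mem_product, mem_univ, true_and, and_true] at hp ⊢
        exact hp
      · intro p hp
        simp only [hLT, hGT, Finset.mem_coe, mem_filter, mem_product, mem_univ, true_and, and_true] at hp ⊢
        exact hp
      · intro p _; rfl
      · intro p _; rfl
    have hdisj : Disjoint LT GTs := by
      rw [Finset.disjoint_left]
      intro p hp hq
      rw [hLT, mem_filter] at hp
      rw [hGT, mem_filter] at hq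
      omega
    have hsubNE : LT ∪ GTs ⊆ (univ ×ˢ univ).filter (fun p => p.1 ≠ p.2) := by
      intro p hp
      rcases mem_union.mp hp with h | h
      · rw [hLT, mem_filter] at h
        refine mem_filter.mpr ⟨h.1, fun he => ?_⟩
        rw [he] at h
        omega
      · rw [hGT, mem_filter] at h
        refine mem_filter.mpr ⟨h.1, fun he => ?_⟩
        rw [he] at h
        omega
    have hNEeq : ((univ ×ˢ univ).filter (fun p : V × V => ¬ p.1 ≠ p.2))
        = univ.image (fun a => (a, a)) := by
      ext p
      simp only [mem_filter, mem_product, mem_univ, true_and, not_not, mem_image]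
      constructor
      · intro h
        refine ⟨p.1, ?_⟩
        rw [Prod.ext_iff]
        exact ⟨rfl, h⟩
      · rintro ⟨a, rfl⟩
        rfl
    have hNEcard : ((univ ×ˢ univ).filter (fun p : V × V => p.1 ≠ p.2)).card = n * n - n := by
      have htot := Finset.card_filter_add_card_filter_not
        (s := univ ×ˢ univ) (p := fun p : V × V => p.1 ≠ p.2)
      rw [hNEeq] at htot
      have himg : (univ.image (fun a : V => (a, a))).card = n := by
        rw [Finset.card_image_of_injective _ (fun a b h => (Prod.ext_iff.mp h).1),
          card_univ, hn]
      have hprod : (univ ×ˢ univ : Finset (V × V)).card = n * n := by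
        rw [Finset.card_product, card_univ, ← hn]
      omega
    have h1 := Finset.card_le_card hALT
    have h2 := Finset.card_union_of_disjoint hdisj
    have h3 := Finset.card_le_card hsubNE
    omega
  -- every trial sequence yields a clique cover
  have hscc : ∀ ω : Fin t → V → Fin d,
      scc G ≤ (∑ i, (auxS' Gᶜ (ω i)).card) + 2 * (auxP Gᶜ A ω).card := by
    intro ω
    set 𝒞 : Finset (Finset V) :=
      (univ.image fun i : Fin t => auxS' Gᶜ (ω i)) ∪
        ((auxP Gᶜ A ω).image fun p => ({p.1, p.2} : Finset V)) with h𝒞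
    have hclique : ∀ C ∈ 𝒞, G.IsClique (C : Set V) := by
      intro C hC
      rcases mem_union.mp hC with h | h
      · obtain ⟨i, _, rfl⟩ := mem_image.mp h
        intro a ha b hb hab
        rw [Finset.mem_coe] at ha hb
        simp only [auxS', mem_filter] at ha hb
        have hnadj : ¬ Gᶜ.Adj a b := ha.2 b hb.1
        by_contra hg
        exact hnadj ((SimpleGraph.compl_adj G a b).mpr ⟨hab, hg⟩)
      · obtain ⟨p, hp, rfl⟩ := mem_image.mp h
        simp only [auxP, mem_filter, hAdef] at hp
        have hadj : G.Adj p.1 p.2 := hp.1.2.2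
        intro a ha b hb hab
        simp only [Finset.coe_insert, Finset.coe_singleton, Set.mem_insert_iff,
          Set.mem_singleton_iff] at ha hb
        rcases ha with rfl | rfl <;> rcases hb with rfl | rfl
        · exact absurd rfl hab
        · exact hadj
        · exact hadj.symm
        · exact absurd rfl hab
    have hcov : ∀ u v, G.Adj u v → ∃ C ∈ 𝒞, u ∈ C ∧ v ∈ C := by
      intro u v huv
      by_cases hc : ∃ i, u ∈ auxS' Gᶜ (ω i) ∧ v ∈ auxS' Gᶜ (ω i)
      · obtain ⟨i, h1, h2⟩ := hc
        exact ⟨auxS' Gᶜ (ω i), mem_union_left _ (mem_image_of_mem _ (mem_univ i)), h1, h2⟩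
      · have hne : u ≠ v := G.ne_of_adj huv
        have heene : ee u ≠ ee v := fun h => hne (hee_inj h)
        rcases heene.lt_or_gt with hlt | hlt
        · refine ⟨{u, v}, mem_union_right _ ?_, by simp, by simp⟩
          have hmem : (u, v) ∈ auxP Gᶜ A ω := by
            simp only [auxP, mem_filter]
            refine ⟨?_, hc⟩
            rw [hAdef, mem_filter]
            exact ⟨by simp, hlt, huv⟩
          exact mem_image_of_mem _ hmem
        · refine ⟨{v, u}, mem_union_right _ ?_, by simp, by simp⟩
          have hmem : (v, u) ∈ auxP Gᶜ A ω := by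
            simp only [auxP, mem_filter]
            refine ⟨?_, ?_⟩
            · rw [hAdef, mem_filter]
              exact ⟨by simp, hlt, huv.symm⟩
            · rintro ⟨i, h1, h2⟩
              exact hc ⟨i, h2, h1⟩
          exact mem_image_of_mem _ hmem
    refine le_trans (Nat.sInf_le ⟨𝒞, ⟨hclique, hcov⟩, rfl⟩) ?_
    rw [h𝒞]
    have hw1 : (∑ C ∈ ((univ.image fun i : Fin t => auxS' Gᶜ (ω i)) ∪
          ((auxP Gᶜ A ω).image fun p => ({p.1, p.2} : Finset V))), C.card)
        + (∑ C ∈ ((univ.image fun i : Fin t => auxS' Gᶜ (ω i)) ∩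
          ((auxP Gᶜ A ω).image fun p => ({p.1, p.2} : Finset V))), C.card)
        = (∑ C ∈ (univ.image fun i : Fin t => auxS' Gᶜ (ω i)), C.card)
        + (∑ C ∈ ((auxP Gᶜ A ω).image fun p => ({p.1, p.2} : Finset V)), C.card) :=
      Finset.sum_union_inter
    have hw2 := sum_image_le_nat univ (fun i : Fin t => auxS' Gᶜ (ω i)) (fun C => C.card)
    have hw3 := sum_image_le_nat (auxP Gᶜ A ω) (fun p => ({p.1, p.2} : Finset V))
      (fun C => C.card)
    have hw4 : ∑ p ∈ auxP Gᶜ A ω, ({p.1, p.2} : Finset V).card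
        ≤ ∑ _p ∈ auxP Gᶜ A ω, 2 :=
      Finset.sum_le_sum fun p _ => le_trans (Finset.card_insert_le _ _) (by simp)
    rw [Finset.sum_const, smul_eq_mul] at hw4
    omega
  -- the expectation bound
  have hkey : ∃ ω : Fin t → V → Fin d,
      ((∑ i, (auxS' Gᶜ (ω i)).card) + 2 * (auxP Gᶜ A ω).card : ℝ)
        ≤ (t:ℝ) * n / d + n * ((d:ℝ) - 1) := by
    have hn3R : (3:ℝ) ≤ (n:ℝ) := by exact_mod_cast hn3
    -- ℕ-level bound for the first part
    have hW1 : (∑ ω : Fin t → V → Fin d, ∑ i, (auxS' Gᶜ (ω i)).card)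
        ≤ t * (n * (d ^ (n - 1) * (d ^ n) ^ (t - 1))) := by
      calc (∑ ω : Fin t → V → Fin d, ∑ i, (auxS' Gᶜ (ω i)).card)
          ≤ ∑ ω : Fin t → V → Fin d, ∑ i, (auxS (d := d) (ω i)).card :=
            Finset.sum_le_sum fun ω _ => Finset.sum_le_sum fun i _ =>
              Finset.card_le_card (Finset.filter_subset _ _)
        _ = ∑ i : Fin t, ∑ ω : Fin t → V → Fin d, (auxS (d := d) (ω i)).card :=
            Finset.sum_comm
        _ = ∑ _i : Fin t, (n * (d ^ (n - 1) * (d ^ n) ^ (t - 1))) := by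
            refine Finset.sum_congr rfl fun i _ => ?_
            calc ∑ ω : Fin t → V → Fin d, (auxS (d := d) (ω i)).card
                = ∑ ω : Fin t → V → Fin d, ∑ v : V, if (ω i) v = 0 then 1 else 0 := by
                  refine Finset.sum_congr rfl fun ω _ => ?_
                  simp only [auxS]
                  exact Finset.card_filter _ _
              _ = ∑ v : V, ∑ ω : Fin t → V → Fin d, if (ω i) v = 0 then 1 else 0 :=
                  Finset.sum_comm
              _ = ∑ _v : V, (d ^ (n - 1) * (d ^ n) ^ (t - 1)) := by
                  refine Finset.sum_congr rfl fun v _ => ?_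
                  calc (∑ ω : Fin t → V → Fin d, if (ω i) v = 0 then 1 else 0)
                      = ((univ : Finset (Fin t → V → Fin d)).filter
                          fun ω => ω i v = 0).card := (Finset.card_filter _ _).symm
                    _ = d ^ (n - 1) * (d ^ n) ^ (t - 1) := by
                        rw [aux_card_coord, ← hn]
              _ = n * (d ^ (n - 1) * (d ^ n) ^ (t - 1)) := by
                  rw [Finset.sum_const, card_univ, ← hn, smul_eq_mul]
        _ = t * (n * (d ^ (n - 1) * (d ^ n) ^ (t - 1))) := by
            rw [Finset.sum_const, card_univ, Fintype.card_fin, smul_eq_mul]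
    -- ℕ-level bound for the second part
    have hW2 : (∑ ω : Fin t → V → Fin d, (auxP Gᶜ A ω).card)
        ≤ ∑ p ∈ A, (d ^ n - (auxGood Gᶜ d p.1 p.2).card) ^ t := by
      calc ∑ ω : Fin t → V → Fin d, (auxP Gᶜ A ω).card
          = ∑ ω : Fin t → V → Fin d, ∑ p ∈ A,
              if (¬ ∃ i, p.1 ∈ auxS' Gᶜ (ω i) ∧ p.2 ∈ auxS' Gᶜ (ω i)) then 1 else 0 := by
            refine Finset.sum_congr rfl fun ω _ => ?_
            simp only [auxP]
            exact Finset.card_filter _ _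
        _ = ∑ p ∈ A, ∑ ω : Fin t → V → Fin d,
              if (¬ ∃ i, p.1 ∈ auxS' Gᶜ (ω i) ∧ p.2 ∈ auxS' Gᶜ (ω i)) then 1 else 0 :=
            Finset.sum_comm
        _ ≤ ∑ p ∈ A, (d ^ n - (auxGood Gᶜ d p.1 p.2).card) ^ t := by
            refine Finset.sum_le_sum fun p _ => ?_
            rw [show (∑ ω : Fin t → V → Fin d,
                if (¬ ∃ i, p.1 ∈ auxS' Gᶜ (ω i) ∧ p.2 ∈ auxS' Gᶜ (ω i)) then 1 else 0)
              = ((univ : Finset (Fin t → V → Fin d)).filter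
                  fun ω => ¬ ∃ i, p.1 ∈ auxS' Gᶜ (ω i) ∧ p.2 ∈ auxS' Gᶜ (ω i)).card
              from (Finset.card_filter _ _).symm]
            have hsub : ((univ : Finset (Fin t → V → Fin d)).filter
                  fun ω => ¬ ∃ i, p.1 ∈ auxS' Gᶜ (ω i) ∧ p.2 ∈ auxS' Gᶜ (ω i))
                ⊆ ((univ : Finset (Fin t → V → Fin d)).filter
                  fun ω => ∀ i, ω i ∉ auxGood Gᶜ d p.1 p.2) := by
              intro ω hω
              rw [mem_filter] at hω ⊢
              refine ⟨mem_univ _, fun i hgood => ?_⟩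
              exact hω.2 ⟨i, mem_auxS'_of_good Gᶜ hgood⟩
            calc _ ≤ _ := Finset.card_le_card hsub
              _ = (d ^ Fintype.card V - (auxGood Gᶜ d p.1 p.2).card) ^ t :=
                  aux_card_bad d t _
              _ = (d ^ n - (auxGood Gᶜ d p.1 p.2).card) ^ t := by rw [← hn]
    -- per-pair real bound
    have hreal2 : ∀ p ∈ A, (((d ^ n - (auxGood Gᶜ d p.1 p.2).card) ^ t : ℕ) : ℝ)
        ≤ ((d:ℝ) ^ n) ^ t * (((d:ℝ) - 1) / ((n:ℝ) - 1)) := by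
      intro p hp
      rw [hAdef, mem_filter] at hp
      obtain ⟨hpmem, hplt, hpadj⟩ := hp
      have hpne : p.1 ≠ p.2 := G.ne_of_adj hpadj
      have hnadj : ¬ Gᶜ.Adj p.1 p.2 := fun h => ((SimpleGraph.compl_adj G p.1 p.2).mp h).2 hpadj
      have hGood := auxGood_card_lb Gᶜ hd hpne hnadj (hdle _) (hdle _)
      rw [← hn] at hGood
      set c := (auxGood Gᶜ d p.1 p.2).card with hcdef
      have hcle : c ≤ d ^ n := by
        rw [hn, hcdef]
        calc (auxGood Gᶜ d p.1 p.2).card ≤ Fintype.card (V → Fin d) :=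
            Finset.card_le_univ _
          _ = d ^ Fintype.card V := by rw [Fintype.card_fun, Fintype.card_fin]
      have hcast : (((d ^ n - c) ^ t : ℕ) : ℝ) = ((d:ℝ) ^ n - (c:ℝ)) ^ t := by
        push_cast [Nat.cast_sub hcle]
        ring
      rw [hcast]
      set ε : ℝ := 1 / (Real.exp 1 ^ 2 * (d:ℝ) ^ 2) with hε
      have hε0 : 0 < ε := by positivity
      have hε1 : ε ≤ 1 := by
        rw [hε, div_le_one (by positivity)]
        have he2 : (2:ℝ) ≤ Real.exp 1 := by linarith [Real.add_one_le_exp (1:ℝ)]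
        have h4 : (1:ℝ) ≤ Real.exp 1 ^ 2 := by nlinarith [he2]
        have h5 : (1:ℝ) ≤ (d:ℝ) ^ 2 := by nlinarith [hd2R]
        nlinarith [h4, h5]
      have hstep : (d:ℝ) ^ n - c ≤ (d:ℝ) ^ n * (1 - ε) := by
        have h2 : (d:ℝ) ^ n * (1 - ε) = (d:ℝ) ^ n - (d:ℝ) ^ n / (Real.exp 1 ^ 2 * (d:ℝ) ^ 2) := by
          rw [hε]; ring
        rw [h2]
        linarith [hGood]
      have h0 : (0:ℝ) ≤ (d:ℝ) ^ n - c := by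
        have : (c:ℝ) ≤ (d:ℝ) ^ n := by exact_mod_cast hcle
        linarith
      have hexp : (1 - ε) ^ t ≤ ((d:ℝ) - 1) / ((n:ℝ) - 1) := by
        have ha : 1 - ε ≤ Real.exp (-ε) := by linarith [Real.add_one_le_exp (-ε)]
        have hb : (1 - ε) ^ t ≤ Real.exp (-ε) ^ t := pow_le_pow_left₀ (by linarith) ha t
        have hc2 : Real.exp (-ε) ^ t = Real.exp ((t:ℝ) * (-ε)) := (Real.exp_nat_mul _ t).symm
        have hd2 : Real.log x ≤ (t:ℝ) * ε := by
          rw [hε]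
          rw [show (t:ℝ) * (1 / (Real.exp 1 ^ 2 * (d:ℝ) ^ 2))
            = (t:ℝ) / (Real.exp 1 ^ 2 * (d:ℝ) ^ 2) from by ring]
          rw [le_div_iff₀ (by positivity)]
          calc Real.log x * (Real.exp 1 ^ 2 * (d:ℝ) ^ 2)
              = Real.exp 1 ^ 2 * (d:ℝ) ^ 2 * Real.log x := by ring
            _ ≤ (t:ℝ) := htlb
        have he : Real.exp ((t:ℝ) * (-ε)) ≤ Real.exp (-Real.log x) := by
          apply Real.exp_le_exp.mpr
          have : (t:ℝ) * (-ε) = -((t:ℝ) * ε) := by ring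
          rw [this]
          linarith
        have hf : Real.exp (-Real.log x) = ((d:ℝ) - 1) / ((n:ℝ) - 1) := by
          rw [Real.exp_neg, Real.exp_log hx0, hxdef, inv_div]
        calc (1 - ε) ^ t ≤ Real.exp (-ε) ^ t := hb
          _ = Real.exp ((t:ℝ) * (-ε)) := hc2
          _ ≤ Real.exp (-Real.log x) := he
          _ = _ := hf
      calc ((d:ℝ) ^ n - (c:ℝ)) ^ t ≤ ((d:ℝ) ^ n * (1 - ε)) ^ t := pow_le_pow_left₀ h0 hstep t
        _ = ((d:ℝ) ^ n) ^ t * (1 - ε) ^ t := mul_pow _ _ _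
        _ ≤ ((d:ℝ) ^ n) ^ t * (((d:ℝ) - 1) / ((n:ℝ) - 1)) :=
            mul_le_mul_of_nonneg_left hexp (by positivity)
    -- the expectation bound over all trial sequences
    have hsum : ∑ ω : Fin t → V → Fin d,
        (((∑ i, (auxS' Gᶜ (ω i)).card : ℕ) : ℝ) + 2 * ((auxP Gᶜ A ω).card : ℝ))
        ≤ (Fintype.card (Fin t → V → Fin d) : ℝ) * ((t:ℝ) * n / d + n * ((d:ℝ) - 1)) := by
      have hcardΩ : (Fintype.card (Fin t → V → Fin d) : ℝ) = ((d:ℝ) ^ n) ^ t := by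
        rw [Fintype.card_fun, Fintype.card_fun, Fintype.card_fin, Fintype.card_fin, ← hn]
        push_cast
        ring
      have hp1 : (∑ ω : Fin t → V → Fin d, ((∑ i, (auxS' Gᶜ (ω i)).card : ℕ) : ℝ))
          ≤ ((d:ℝ) ^ n) ^ t * ((t:ℝ) * n / d) := by
        rw [← Nat.cast_sum]
        have h1 : ((∑ ω : Fin t → V → Fin d, ∑ i, (auxS' Gᶜ (ω i)).card : ℕ) : ℝ)
            ≤ ((t * (n * (d ^ (n - 1) * (d ^ n) ^ (t - 1))) : ℕ) : ℝ) := by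
          exact_mod_cast hW1
        refine le_trans h1 (le_of_eq ?_)
        have e1 : (d:ℝ) ^ n = (d:ℝ) ^ (n - 1) * d := by
          rw [← pow_succ, Nat.sub_add_cancel hn1]
        have e2 : ((d:ℝ) ^ n) ^ t = ((d:ℝ) ^ n) ^ (t - 1) * (d:ℝ) ^ n := by
          rw [← pow_succ, Nat.sub_add_cancel ht_pos]
        push_cast
        rw [e2, e1]
        field_simp
      have hp2 : (∑ ω : Fin t → V → Fin d, ((auxP Gᶜ A ω).card : ℝ))
          ≤ (A.card : ℝ) * (((d:ℝ) ^ n) ^ t * (((d:ℝ) - 1) / ((n:ℝ) - 1))) := by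
        rw [← Nat.cast_sum]
        have h1 : ((∑ ω : Fin t → V → Fin d, (auxP Gᶜ A ω).card : ℕ) : ℝ)
            ≤ ((∑ p ∈ A, (d ^ n - (auxGood Gᶜ d p.1 p.2).card) ^ t : ℕ) : ℝ) := by
          exact_mod_cast hW2
        refine le_trans h1 ?_
        rw [Nat.cast_sum]
        calc ∑ p ∈ A, (((d ^ n - (auxGood Gᶜ d p.1 p.2).card) ^ t : ℕ) : ℝ)
            ≤ ∑ _p ∈ A, ((d:ℝ) ^ n) ^ t * (((d:ℝ) - 1) / ((n:ℝ) - 1)) :=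
              Finset.sum_le_sum hreal2
          _ = (A.card : ℝ) * (((d:ℝ) ^ n) ^ t * (((d:ℝ) - 1) / ((n:ℝ) - 1))) := by
              rw [Finset.sum_const, nsmul_eq_mul]
      have hA2R : 2 * (A.card : ℝ) ≤ (n:ℝ) * ((n:ℝ) - 1) := by
        have hnn : n ≤ n * n := by
          calc n = n * 1 := (mul_one n).symm
            _ ≤ n * n := Nat.mul_le_mul_left n hn1
        have h2 : ((2 * A.card : ℕ) : ℝ) ≤ ((n * n - n : ℕ) : ℝ) := by exact_mod_cast hA2
        push_cast [Nat.cast_sub hnn] at h2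
        linarith
      have hsplit : ∑ ω : Fin t → V → Fin d,
          (((∑ i, (auxS' Gᶜ (ω i)).card : ℕ) : ℝ) + 2 * ((auxP Gᶜ A ω).card : ℝ))
          = (∑ ω : Fin t → V → Fin d, ((∑ i, (auxS' Gᶜ (ω i)).card : ℕ) : ℝ))
            + 2 * (∑ ω : Fin t → V → Fin d, ((auxP Gᶜ A ω).card : ℝ)) := by
        rw [Finset.sum_add_distrib, ← Finset.mul_sum]
      rw [hsplit]
      have hfin2 : 2 * ((A.card : ℝ) * (((d:ℝ) ^ n) ^ t * (((d:ℝ) - 1) / ((n:ℝ) - 1))))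
          ≤ ((d:ℝ) ^ n) ^ t * ((n:ℝ) * ((d:ℝ) - 1)) := by
        have hn1R : (0:ℝ) < (n:ℝ) - 1 := by linarith
        have hd1R : (0:ℝ) ≤ (d:ℝ) - 1 := by linarith
        have hDt : (0:ℝ) ≤ ((d:ℝ) ^ n) ^ t := by positivity
        have hq : (0:ℝ) ≤ ((d:ℝ) ^ n) ^ t * (((d:ℝ) - 1) / ((n:ℝ) - 1)) :=
          mul_nonneg hDt (div_nonneg hd1R hn1R.le)
        calc 2 * ((A.card : ℝ) * (((d:ℝ) ^ n) ^ t * (((d:ℝ) - 1) / ((n:ℝ) - 1))))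
            = (2 * (A.card : ℝ)) * (((d:ℝ) ^ n) ^ t * (((d:ℝ) - 1) / ((n:ℝ) - 1))) := by
              ring
          _ ≤ ((n:ℝ) * ((n:ℝ) - 1)) * (((d:ℝ) ^ n) ^ t * (((d:ℝ) - 1) / ((n:ℝ) - 1))) :=
              mul_le_mul_of_nonneg_right hA2R hq
          _ = ((d:ℝ) ^ n) ^ t * ((n:ℝ) * ((d:ℝ) - 1)) := by
              field_simp
      have hp2' : 2 * (∑ ω : Fin t → V → Fin d, ((auxP Gᶜ A ω).card : ℝ))
          ≤ ((d:ℝ) ^ n) ^ t * ((n:ℝ) * ((d:ℝ) - 1)) := by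
        linarith
      rw [hcardΩ]
      calc (∑ ω : Fin t → V → Fin d, ((∑ i, (auxS' Gᶜ (ω i)).card : ℕ) : ℝ))
            + 2 * (∑ ω : Fin t → V → Fin d, ((auxP Gᶜ A ω).card : ℝ))
          ≤ ((d:ℝ) ^ n) ^ t * ((t:ℝ) * n / d) + ((d:ℝ) ^ n) ^ t * ((n:ℝ) * ((d:ℝ) - 1)) := by
            linarith
        _ = ((d:ℝ) ^ n) ^ t * ((t:ℝ) * n / d + n * ((d:ℝ) - 1)) := by ring
    haveI : Nonempty (Fin t → V → Fin d) := ⟨fun _ _ => 0⟩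
    by_contra hcon
    push_neg at hcon
    have hlt : (Fintype.card (Fin t → V → Fin d) : ℝ) * ((t:ℝ) * n / d + n * ((d:ℝ) - 1))
        < ∑ ω : Fin t → V → Fin d,
          (((∑ i, (auxS' Gᶜ (ω i)).card : ℕ) : ℝ) + 2 * ((auxP Gᶜ A ω).card : ℝ)) := by
      calc (Fintype.card (Fin t → V → Fin d) : ℝ) * ((t:ℝ) * n / d + n * ((d:ℝ) - 1))
          = ∑ _ω : Fin t → V → Fin d, ((t:ℝ) * n / d + n * ((d:ℝ) - 1)) := by
            rw [Finset.sum_const, card_univ, nsmul_eq_mul]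
        _ < _ := Finset.sum_lt_sum_of_nonempty Finset.univ_nonempty (fun ω _ => hcon ω)
    linarith
  obtain ⟨ω, hω⟩ := hkey
  have hfinal : (t:ℝ) * n / d + n * ((d:ℝ) - 1)
      ≤ (Real.exp 1 ^ 2 + 1) * n * d * ((⌈Real.log x⌉ : ℤ) : ℝ) := by
    have hL : Real.log x ≤ ((⌈Real.log x⌉ : ℤ) : ℝ) := Int.le_ceil _
    have hL1 : (1:ℝ) ≤ ((⌈Real.log x⌉ : ℤ) : ℝ) := by
      have : (0:ℤ) < ⌈Real.log x⌉ := Int.ceil_pos.mpr hlogx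
      exact_mod_cast this
    set L : ℝ := ((⌈Real.log x⌉ : ℤ) : ℝ) with hLdef
    have h1 : (t:ℝ) ≤ Real.exp 1 ^ 2 * (d:ℝ)^2 * L + 1 := by
      nlinarith [mul_le_mul_of_nonneg_left hL
        (show (0:ℝ) ≤ Real.exp 1 ^ 2 * (d:ℝ)^2 by positivity)]
    have hnpos : (0:ℝ) < n := by linarith
    have h2 : (t:ℝ) * n / d ≤ (Real.exp 1 ^ 2 * (d:ℝ)^2 * L + 1) * (n:ℝ) / d := by
      gcongr
    have h3 : (Real.exp 1 ^ 2 * (d:ℝ)^2 * L + 1) * (n:ℝ) / d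
        = Real.exp 1 ^ 2 * n * d * L + n / d := by
      field_simp
    have h4 : (n:ℝ)/d ≤ n := div_le_self (by positivity) (by linarith)
    have h5 : (n:ℝ) * d ≤ n * d * L := by
      nlinarith [mul_nonneg (mul_nonneg hnpos.le hdpos.le) (sub_nonneg.mpr hL1)]
    have h6 : (Real.exp 1 ^ 2 + 1) * n * d * L
        = Real.exp 1 ^ 2 * n * d * L + n * d * L := by ring
    linarith
  calc (scc G : ℝ)
      ≤ ((∑ i, (auxS' Gᶜ (ω i)).card) + 2 * (auxP Gᶜ A ω).card : ℝ) := by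
        exact_mod_cast hscc ω
    _ ≤ (t:ℝ) * n / d + n * ((d:ℝ) - 1) := hω
    _ ≤ _ := hfinal
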